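/- For all integers n, m ≥ 1, the domination polynomial of the n×m rook graph satisfies D_{R_{n,m}}(x) = ((1+x)^n − 1)^m − (−1)^m Σ_{k=0}^{m−1} (−1)^k C(m,k) ((1+x)^k − 1)^n as an identity in the polynomial ring ℤ[x]. -/

import Mathlib

open Finset Polynomial

/-- The `n × m` rook graph: vertices are squares `(a,b)`; two distinct squares are
adjacent iff they share a row or a column. -/
def rookGraph (n m : ℕ) : SimpleGraph (Fin n × Fin m) where
  Adj v w := v ≠ w ∧ (v.1 = w.1 ∨ v.2 = w.2)
  symm := by
    constructor
    rintro v w ⟨h1, h2⟩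
    exact ⟨h1.symm, h2.imp Eq.symm Eq.symm⟩
  loopless := by
    constructor
    rintro v ⟨h1, _⟩
    exact h1 rfl

/-- `S` is a dominating set of the `n × m` rook graph. -/
def IsDomSet (n m : ℕ) (S : Finset (Fin n × Fin m)) : Prop :=
  ∀ v, v ∈ S ∨ ∃ u ∈ S, (rookGraph n m).Adj u v

/-- `domCount n m k` is the number of dominating sets of cardinality `k`
of the `n × m` rook graph. -/
noncomputable def domCount (n m k : ℕ) : ℕ :=
  Set.ncard {S : Finset (Fin n × Fin m) | S.card = k ∧ IsDomSet n m S}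

/-- `ECount n m k` is the number of `k`-element subsets of `{1,…,n} × {1,…,m}`
that meet every row and every column. -/
noncomputable def ECount (n m k : ℕ) : ℕ :=
  Set.ncard {T : Finset (Fin n × Fin m) | T.card = k ∧
    (∀ r : Fin n, ∃ c : Fin m, (r, c) ∈ T) ∧ (∀ c : Fin m, ∃ r : Fin n, (r, c) ∈ T)}

/-- The domination polynomial of the `n × m` rook graph, as a polynomial over `ℤ`. -/
noncomputable def domPoly (n m : ℕ) : Polynomial ℤ :=
  ∑ k ∈ Finset.range (n * m + 1), Polynomial.C (domCount n m k : ℤ) * Polynomial.X ^ k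

open scoped Classical
set_option linter.unusedSectionVars false
set_option linter.unusedVariables false

section Aux
variable {α β : Type*} [Fintype α] [Fintype β]

lemma pow_sum_powerset (B : Finset β) :
    ∑ T ∈ B.powerset, (X : ℤ[X]) ^ T.card = (1 + X) ^ B.card := by
  have h := Finset.prod_add (fun _ : β => (X : ℤ[X])) (fun _ => 1) B
  simp only [Finset.prod_const, Finset.prod_const_one, mul_one, one_pow] at h
  rw [add_comm, ← h]

lemma pow_sum_powerset_ne (B : Finset β) :
    ∑ T ∈ B.powerset.erase ∅, (X : ℤ[X]) ^ T.card = (1 + X) ^ B.card - 1 := by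
  rw [Finset.sum_erase_eq_sub (Finset.empty_mem_powerset B), pow_sum_powerset]
  simp

/-- fibSet: turn a choice of nonempty fibers into a subset of `α × β`. -/
noncomputable def fibSet (g : α → Finset β) : Finset (α × β) :=
  Finset.univ.biUnion fun a => (g a).image (Prod.mk a)

lemma mem_toSet {g : α → Finset β} {a : α} {b : β} :
    (a, b) ∈ fibSet g ↔ b ∈ g a := by
  simp [fibSet, Prod.ext_iff]

lemma card_toSet (g : α → Finset β) : (fibSet g).card = ∑ a, (g a).card := by
  rw [fibSet, Finset.card_biUnion]
  · refine Finset.sum_congr rfl fun a _ => ?_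
    exact Finset.card_image_of_injective _ (fun b b' h => by simpa using h)
  · intro x _ y _ hxy
    rw [Function.onFun, Finset.disjoint_left]
    rintro p hp hq
    simp only [Finset.mem_image] at hp hq
    obtain ⟨b, _, rfl⟩ := hp
    obtain ⟨b', _, h⟩ := hq
    exact hxy (congrArg Prod.fst h).symm

lemma core_gf (B : Finset β) :
    ∑ S ∈ Finset.univ.filter (fun S : Finset (α × β) =>
        (∀ a : α, ∃ b, (a, b) ∈ S) ∧ ∀ p ∈ S, p.2 ∈ B),
      (X : ℤ[X]) ^ S.card
    = ((1 + X) ^ B.card - 1) ^ Fintype.card α := by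
  calc ∑ S ∈ Finset.univ.filter (fun S : Finset (α × β) =>
        (∀ a : α, ∃ b, (a, b) ∈ S) ∧ ∀ p ∈ S, p.2 ∈ B), (X : ℤ[X]) ^ S.card
      = ∑ g ∈ Fintype.piFinset (fun _ : α => B.powerset.erase ∅),
          ∏ a : α, (X : ℤ[X]) ^ (g a).card := by
        refine Finset.sum_nbij' (fun S => fun a => B.filter (fun b => (a, b) ∈ S))
          (fun g => fibSet g) ?_ ?_ ?_ ?_ ?_
        · intro S hS
          simp only [Finset.mem_filter, Finset.mem_univ, true_and] at hS
          rw [Fintype.mem_piFinset]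
          intro a
          rw [Finset.mem_erase, Finset.mem_powerset]
          refine ⟨?_, Finset.filter_subset _ _⟩
          obtain ⟨b, hb⟩ := hS.1 a
          have : b ∈ B := hS.2 (a, b) hb
          exact Finset.ne_empty_of_mem (Finset.mem_filter.2 ⟨this, hb⟩)
        · intro g hg
          rw [Fintype.mem_piFinset] at hg
          simp only [Finset.mem_filter, Finset.mem_univ, true_and]
          constructor
          · intro a
            have := hg a
            rw [Finset.mem_erase, Finset.mem_powerset] at this
            obtain ⟨b, hb⟩ := Finset.nonempty_iff_ne_empty.2 this.1
            exact ⟨b, mem_toSet.2 hb⟩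
          · rintro ⟨a, b⟩ hp
            have := hg a
            rw [Finset.mem_erase, Finset.mem_powerset] at this
            exact this.2 (mem_toSet.1 hp)
        · intro S hS
          simp only [Finset.mem_filter, Finset.mem_univ, true_and] at hS
          ext ⟨a, b⟩
          rw [mem_toSet, Finset.mem_filter]
          exact ⟨fun h => h.2, fun h => ⟨hS.2 (a, b) h, h⟩⟩
        · intro g hg
          rw [Fintype.mem_piFinset] at hg
          funext a
          ext b
          rw [Finset.mem_filter, mem_toSet]
          have := hg a
          rw [Finset.mem_erase, Finset.mem_powerset] at this
          exact ⟨fun h => h.2, fun h => ⟨this.2 h, h⟩⟩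
        · intro S hS
          simp only [Finset.mem_filter, Finset.mem_univ, true_and] at hS
          have hs : fibSet (fun a => B.filter (fun b => (a, b) ∈ S)) = S := by
            ext ⟨a, b⟩
            rw [mem_toSet, Finset.mem_filter]
            exact ⟨fun h => h.2, fun h => ⟨hS.2 (a, b) h, h⟩⟩
          rw [Finset.prod_pow_eq_pow_sum, ← card_toSet, hs]
    _ = ∏ a : α, ∑ T ∈ B.powerset.erase ∅, (X : ℤ[X]) ^ T.card := by
        rw [Finset.prod_univ_sum]
    _ = ((1 + X) ^ B.card - 1) ^ Fintype.card α := by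
        simp [pow_sum_powerset_ne, pow_sum_powerset, Finset.prod_const, Finset.card_univ]

lemma rows_gf :
    ∑ S ∈ Finset.univ.filter (fun S : Finset (α × β) => ∀ a : α, ∃ b, (a, b) ∈ S),
      (X : ℤ[X]) ^ S.card
    = ((1 + X) ^ Fintype.card β - 1) ^ Fintype.card α := by
  have h := core_gf (α := α) (univ : Finset β)
  rw [Finset.card_univ] at h
  rw [← h]
  apply Finset.sum_congr _ (fun _ _ => rfl)
  apply Finset.filter_congr
  intro S _
  simp

lemma cols_gf :
    ∑ S ∈ Finset.univ.filter (fun S : Finset (α × β) => ∀ b : β, ∃ a, (a, b) ∈ S),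
      (X : ℤ[X]) ^ S.card
    = ((1 + X) ^ Fintype.card α - 1) ^ Fintype.card β := by
  rw [← rows_gf (α := β) (β := α)]
  refine Finset.sum_nbij' (fun S => S.map (Equiv.prodComm α β).toEmbedding)
    (fun S => S.map (Equiv.prodComm β α).toEmbedding) ?_ ?_ ?_ ?_ ?_
  · intro S hS
    simp only [Finset.mem_filter, Finset.mem_univ, true_and] at hS ⊢
    intro b
    obtain ⟨a, ha⟩ := hS b
    exact ⟨a, by rw [Finset.mem_map_equiv]; exact ha⟩
  · intro S hS
    simp only [Finset.mem_filter, Finset.mem_univ, true_and] at hS ⊢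
    intro b
    obtain ⟨a, ha⟩ := hS b
    exact ⟨a, by rw [Finset.mem_map_equiv]; exact ha⟩
  · intro S _
    ext p
    simp [Finset.mem_map_equiv]
  · intro S _
    ext p
    simp [Finset.mem_map_equiv]
  · intro S _
    rw [Finset.card_map]

lemma supersets_sum (C : Finset β) :
    ∑ B ∈ (Finset.univ : Finset β).powerset,
        (-1 : ℤ[X]) ^ (Fintype.card β - B.card) * (if C ⊆ B then 1 else 0)
      = if C = Finset.univ then 1 else 0 := by
  rw [Finset.powerset_univ]
  rw [Fintype.sum_bijective _ (Function.Involutive.bijective (fun s : Finset β => compl_compl s))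
    _ (fun D => (-1 : ℤ[X]) ^ D.card * (if D ⊆ Cᶜ then 1 else 0))
    (fun B => by simp only [Finset.card_compl, Finset.compl_subset_compl])]
  have h1 : ∑ D : Finset β, (-1 : ℤ[X]) ^ D.card * (if D ⊆ Cᶜ then 1 else 0)
      = ∑ D ∈ (Cᶜ : Finset β).powerset, (-1 : ℤ[X]) ^ D.card := by
    simp only [mul_ite, mul_one, mul_zero, ← Finset.mem_powerset]
    rw [Finset.sum_ite_mem, Finset.univ_inter]
  have h2 : (∑ D ∈ (Cᶜ : Finset β).powerset, (-1 : ℤ[X]) ^ D.card)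
      = Polynomial.C (∑ D ∈ (Cᶜ : Finset β).powerset, (-1 : ℤ) ^ D.card) := by
    rw [map_sum]; simp
  rw [h1, h2, Finset.sum_powerset_neg_one_pow_card]
  simp only [apply_ite Polynomial.C, map_one, map_zero, Finset.compl_eq_empty_iff]

lemma image_snd_eq_univ_iff (S : Finset (α × β)) :
    S.image Prod.snd = Finset.univ ↔ ∀ b : β, ∃ a, (a, b) ∈ S := by
  rw [Finset.eq_univ_iff_forall]
  apply forall_congr'
  intro b
  simp only [Finset.mem_image, Prod.exists]
  constructor
  · rintro ⟨a, b', h, rfl⟩; exact ⟨a, h⟩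
  · rintro ⟨a, h⟩; exact ⟨a, b, h, rfl⟩

lemma both_gf :
    ∑ S ∈ Finset.univ.filter (fun S : Finset (α × β) =>
        (∀ a : α, ∃ b, (a, b) ∈ S) ∧ ∀ b : β, ∃ a, (a, b) ∈ S), (X : ℤ[X]) ^ S.card
    = ∑ B ∈ (Finset.univ : Finset β).powerset,
        (-1 : ℤ[X]) ^ (Fintype.card β - B.card) * ((1 + X) ^ B.card - 1) ^ Fintype.card α := by
  symm
  calc ∑ B ∈ (Finset.univ : Finset β).powerset,
        (-1 : ℤ[X]) ^ (Fintype.card β - B.card) * ((1 + X) ^ B.card - 1) ^ Fintype.card α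
      = ∑ B ∈ (Finset.univ : Finset β).powerset,
          ∑ S ∈ Finset.univ.filter (fun S : Finset (α × β) => ∀ a : α, ∃ b, (a, b) ∈ S),
            (-1 : ℤ[X]) ^ (Fintype.card β - B.card) *
              (if ∀ p ∈ S, p.2 ∈ B then (X : ℤ[X]) ^ S.card else 0) := by
        refine Finset.sum_congr rfl fun B _ => ?_
        rw [← core_gf B, ← Finset.filter_filter, Finset.sum_filter, Finset.mul_sum]
    _ = ∑ S ∈ Finset.univ.filter (fun S : Finset (α × β) => ∀ a : α, ∃ b, (a, b) ∈ S),
          ∑ B ∈ (Finset.univ : Finset β).powerset,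
            (-1 : ℤ[X]) ^ (Fintype.card β - B.card) *
              (if ∀ p ∈ S, p.2 ∈ B then (X : ℤ[X]) ^ S.card else 0) := Finset.sum_comm
    _ = ∑ S ∈ Finset.univ.filter (fun S : Finset (α × β) => ∀ a : α, ∃ b, (a, b) ∈ S),
          (if ∀ b : β, ∃ a, (a, b) ∈ S then (X : ℤ[X]) ^ S.card else 0) := by
        refine Finset.sum_congr rfl fun S _ => ?_
        have hc : ∀ B : Finset β, (∀ p ∈ S, p.2 ∈ B) ↔ S.image Prod.snd ⊆ B :=
          fun B => Finset.image_subset_iff.symm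
        calc ∑ B ∈ (Finset.univ : Finset β).powerset,
              (-1 : ℤ[X]) ^ (Fintype.card β - B.card) *
                (if ∀ p ∈ S, p.2 ∈ B then (X : ℤ[X]) ^ S.card else 0)
            = (∑ B ∈ (Finset.univ : Finset β).powerset,
                (-1 : ℤ[X]) ^ (Fintype.card β - B.card) *
                  (if S.image Prod.snd ⊆ B then 1 else 0)) * (X : ℤ[X]) ^ S.card := by
              rw [Finset.sum_mul]
              refine Finset.sum_congr rfl fun B _ => ?_
              rw [mul_assoc, boole_mul]
              simp only [hc B]
          _ = (if ∀ b : β, ∃ a, (a, b) ∈ S then (X : ℤ[X]) ^ S.card else 0) := by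
              rw [supersets_sum, boole_mul]
              simp only [image_snd_eq_univ_iff]
    _ = ∑ S ∈ Finset.univ.filter (fun S : Finset (α × β) =>
          (∀ a : α, ∃ b, (a, b) ∈ S) ∧ ∀ b : β, ∃ a, (a, b) ∈ S), (X : ℤ[X]) ^ S.card := by
        rw [← Finset.sum_filter, Finset.filter_filter]

end Aux

lemma isDomSet_iff (n m : ℕ) (S : Finset (Fin n × Fin m)) :
    IsDomSet n m S ↔ (∀ a, ∃ b, (a, b) ∈ S) ∨ (∀ b, ∃ a, (a, b) ∈ S) := by
  constructor
  · intro h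
    by_contra hc
    push_neg at hc
    obtain ⟨⟨a, ha⟩, ⟨b, hb⟩⟩ := hc
    rcases h (a, b) with hv | ⟨⟨a', b'⟩, hu, hne, hadj⟩
    · exact ha b hv
    · rcases hadj with h1 | h1
      · simp only at h1
        exact ha b' (h1 ▸ hu)
      · simp only at h1
        exact hb a' (h1 ▸ hu)
  · rintro (h | h) ⟨a, b⟩
    · obtain ⟨b', hb'⟩ := h a
      by_cases hbb : b' = b
      · exact Or.inl (hbb ▸ hb')
      · exact Or.inr ⟨(a, b'), hb', ⟨by simp [Prod.ext_iff, hbb], Or.inl rfl⟩⟩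
    · obtain ⟨a', ha'⟩ := h b
      by_cases haa : a' = a
      · exact Or.inl (haa ▸ ha')
      · exact Or.inr ⟨(a', b), ha', ⟨by simp [Prod.ext_iff, haa], Or.inr rfl⟩⟩

lemma domCount_eq (n m k : ℕ) :
    domCount n m k
      = ((Finset.univ.filter fun S : Finset (Fin n × Fin m) => IsDomSet n m S).filter
          fun S => S.card = k).card := by
  rw [domCount, Finset.filter_filter, ← Set.ncard_coe_finset]
  congr 1
  ext S
  simp [and_comm]

lemma domPoly_eq (n m : ℕ) :
    domPoly n m = ∑ S ∈ Finset.univ.filter (fun S : Finset (Fin n × Fin m) => IsDomSet n m S),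
      (X : ℤ[X]) ^ S.card := by
  have hmap : ∀ S ∈ Finset.univ.filter (fun S : Finset (Fin n × Fin m) => IsDomSet n m S),
      S.card ∈ Finset.range (n * m + 1) := by
    intro S _
    rw [Finset.mem_range, Nat.lt_succ_iff]
    calc S.card ≤ Fintype.card (Fin n × Fin m) := Finset.card_le_univ S
      _ = n * m := by simp
  rw [← Finset.sum_fiberwise_of_maps_to hmap (fun S => (X : ℤ[X]) ^ S.card), domPoly]
  refine Finset.sum_congr rfl fun k _ => ?_
  have h1 : ∑ S ∈ (Finset.univ.filter fun S : Finset (Fin n × Fin m) => IsDomSet n m S).filter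
        (fun S => S.card = k), (X : ℤ[X]) ^ S.card
      = ((Finset.univ.filter fun S : Finset (Fin n × Fin m) => IsDomSet n m S).filter
        (fun S => S.card = k)).card • (X : ℤ[X]) ^ k := by
    rw [← Finset.sum_const]
    exact Finset.sum_congr rfl fun S hS => by rw [(Finset.mem_filter.1 hS).2]
  rw [h1, domCount_eq, nsmul_eq_mul, map_natCast]


/-- Theorem 4: the domination polynomial of the `n × m` rook graph. -/
theorem rook_domination_polynomial (n m : ℕ) (hn : 1 ≤ n) (hm : 1 ≤ m) :
    domPoly n m =
      ((1 + Polynomial.X) ^ n - 1) ^ m -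
        (-1 : Polynomial ℤ) ^ m *
          ∑ k ∈ Finset.range m,
            (-1 : Polynomial ℤ) ^ k * Polynomial.C (m.choose k : ℤ) *
              ((1 + Polynomial.X) ^ k - 1) ^ n := by
  have hU : Finset.univ.filter (fun S : Finset (Fin n × Fin m) => IsDomSet n m S)
      = Finset.univ.filter (fun S : Finset (Fin n × Fin m) => ∀ a, ∃ b, (a, b) ∈ S)
        ∪ Finset.univ.filter (fun S : Finset (Fin n × Fin m) => ∀ b, ∃ a, (a, b) ∈ S) := by
    ext S
    simp only [Finset.mem_filter, Finset.mem_union, Finset.mem_univ, true_and, isDomSet_iff]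
  have hI : Finset.univ.filter (fun S : Finset (Fin n × Fin m) => ∀ a, ∃ b, (a, b) ∈ S)
        ∩ Finset.univ.filter (fun S : Finset (Fin n × Fin m) => ∀ b, ∃ a, (a, b) ∈ S)
      = Finset.univ.filter (fun S : Finset (Fin n × Fin m) =>
          (∀ a, ∃ b, (a, b) ∈ S) ∧ ∀ b, ∃ a, (a, b) ∈ S) := by
    ext S
    simp only [Finset.mem_filter, Finset.mem_inter, Finset.mem_univ, true_and]
  have hsum : ∑ S ∈ Finset.univ.filter (fun S : Finset (Fin n × Fin m) => IsDomSet n m S),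
        (X : ℤ[X]) ^ S.card
      = (∑ S ∈ Finset.univ.filter (fun S : Finset (Fin n × Fin m) => ∀ a, ∃ b, (a, b) ∈ S),
            (X : ℤ[X]) ^ S.card)
        + (∑ S ∈ Finset.univ.filter (fun S : Finset (Fin n × Fin m) => ∀ b, ∃ a, (a, b) ∈ S),
            (X : ℤ[X]) ^ S.card)
        - ∑ S ∈ Finset.univ.filter (fun S : Finset (Fin n × Fin m) =>
            (∀ a, ∃ b, (a, b) ∈ S) ∧ ∀ b, ∃ a, (a, b) ∈ S), (X : ℤ[X]) ^ S.card := by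
    rw [hU, ← hI, eq_sub_iff_add_eq, Finset.sum_union_inter]
  have hA : ∑ S ∈ Finset.univ.filter (fun S : Finset (Fin n × Fin m) => ∀ a, ∃ b, (a, b) ∈ S),
      (X : ℤ[X]) ^ S.card = ((1 + X) ^ m - 1) ^ n := by
    have h := rows_gf (α := Fin n) (β := Fin m)
    simp only [Fintype.card_fin] at h
    refine Eq.trans (Finset.sum_congr ?_ fun _ _ => rfl) h
    ext S
    simp
  have hB : ∑ S ∈ Finset.univ.filter (fun S : Finset (Fin n × Fin m) => ∀ b, ∃ a, (a, b) ∈ S),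
      (X : ℤ[X]) ^ S.card = ((1 + X) ^ n - 1) ^ m := by
    have h := cols_gf (α := Fin n) (β := Fin m)
    simp only [Fintype.card_fin] at h
    refine Eq.trans (Finset.sum_congr ?_ fun _ _ => rfl) h
    ext S
    simp
  have hE : ∑ S ∈ Finset.univ.filter (fun S : Finset (Fin n × Fin m) =>
        (∀ a, ∃ b, (a, b) ∈ S) ∧ ∀ b, ∃ a, (a, b) ∈ S), (X : ℤ[X]) ^ S.card
      = ∑ j ∈ Finset.range (m + 1),
          (m.choose j) • ((-1 : ℤ[X]) ^ (m - j) * ((1 + X) ^ j - 1) ^ n) := by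
    have h := both_gf (α := Fin n) (β := Fin m)
    simp only [Fintype.card_fin] at h
    have h2 : ∑ S ∈ Finset.univ.filter (fun S : Finset (Fin n × Fin m) =>
          (∀ a, ∃ b, (a, b) ∈ S) ∧ ∀ b, ∃ a, (a, b) ∈ S), (X : ℤ[X]) ^ S.card
        = ∑ B ∈ (Finset.univ : Finset (Fin m)).powerset,
            (-1 : ℤ[X]) ^ (m - B.card) * ((1 + X) ^ B.card - 1) ^ n := by
      refine Eq.trans (Finset.sum_congr ?_ fun _ _ => rfl) h
      ext S
      simp
    rw [h2, Finset.sum_powerset_apply_card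
      (f := fun j => (-1 : ℤ[X]) ^ (m - j) * ((1 + X) ^ j - 1) ^ n)]
    simp only [Finset.card_univ, Fintype.card_fin]
  rw [domPoly_eq, hsum, hA, hB, hE, Finset.sum_range_succ]
  simp only [Nat.choose_self, Nat.sub_self, pow_zero, one_mul, one_smul]
  rw [Finset.mul_sum]
  rw [Finset.sum_congr rfl (g := fun j => (-1 : ℤ[X]) ^ m *
      ((-1 : ℤ[X]) ^ j * Polynomial.C (m.choose j : ℤ) * ((1 + X) ^ j - 1) ^ n))
      (fun j hj => by
        rw [Finset.mem_range] at hj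
        have hpow : (-1 : ℤ[X]) ^ m * (-1) ^ j = (-1) ^ (m - j) := by
          rw [← pow_add, show m + j = (m - j) + 2 * j by omega, pow_add, pow_mul, neg_one_sq,
            one_pow, mul_one]
        simp only [nsmul_eq_mul, map_natCast, ← hpow]
        ring)]
  ring
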